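/- arXiv:1307.4067 — 3 statements merged into one kernel-verified Lean document; each statement's English description precedes it below -/
import Mathlib

section
/- Let N ≥ 5 be an integer and let A, B > 0. Define Ψ : (0,∞) × ℝ^N → ℝ by Ψ(d, τ) := A (2|τ|² + N)(1 + |τ|²)^{−(N−2)} d^{−(N−2)} + B d^{N−4}. Set d* := ( N(N−2)A / ((N−4)B) )^{1/(2(N−3))}. Then (d*, 0) is a critical point of Ψ, i.e. the gradient of Ψ vanishes at (d*, 0); this critical point is nondegenerate, i.e. the Hessian matrix of Ψ at (d*, 0) is invertible; and it is of saddle type: the second derivative of Ψ in the d-direction at (d*, 0) is strictly positive, while for each i = 1,…,N the second derivative in the τ_i-direction at (d*, 0) is strictly negative, and all mixed second derivatives between d and the τ_i vanish at (d*, 0). -/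
open scoped ENNReal
open MeasureTheory Filter Metric Set

noncomputable section

abbrev Euc (N : ℕ) := EuclideanSpace ℝ (Fin N)

/-- The Laplacian, defined pointwise as the sum of second derivatives along
the coordinate directions. -/
def lap {N : ℕ} (f : Euc N → ℝ) (x : Euc N) : ℝ :=
  ∑ i : Fin N, iteratedDeriv 2 (fun t : ℝ => f (x + t • EuclideanSpace.single i (1 : ℝ))) 0

/-- The bi-Laplacian `Δ²`. -/
def bilap {N : ℕ} (f : Euc N → ℝ) : Euc N → ℝ := lap (lap f)

/-- The normalizing constant `α_N = (N(N-4)(N-2)(N+2))^((N-4)/8)`. -/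
def alphaN (N : ℕ) : ℝ :=
  ((N : ℝ) * ((N : ℝ) - 4) * ((N : ℝ) - 2) * ((N : ℝ) + 2)) ^ (((N : ℝ) - 4) / 8)

/-- The critical exponent `p = (N+4)/(N-4)`. -/
def critExp (N : ℕ) : ℝ := ((N : ℝ) + 4) / ((N : ℝ) - 4)

/-- The concentration exponent `σ = (N-2)/(2(N-3))`. -/
def sigmaN (N : ℕ) : ℝ := ((N : ℝ) - 2) / (2 * ((N : ℝ) - 3))

/-- The standard bubble `U_{μ,ξ}(x) = α_N (μ/(μ² + |x-ξ|²))^((N-4)/2)`. -/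
def bubble (N : ℕ) (μ : ℝ) (ξ x : Euc N) : ℝ :=
  alphaN N * (μ / (μ ^ 2 + ‖x - ξ‖ ^ 2)) ^ (((N : ℝ) - 4) / 2)

/-- `P` solves the Navier problem `Δ²P = g` in `D`, `P = ΔP = 0` on `∂D`:
`P` is C⁴ on `D`, `Δ²P = g` pointwise in `D`, and `P` and `ΔP` extend continuously
to the closure of `D` with the extensions vanishing on the boundary. -/
def NavierSolves {N : ℕ} (D : Set (Euc N)) (P g : Euc N → ℝ) : Prop :=
  ContDiffOn ℝ 4 P D ∧ (∀ x ∈ D, bilap P x = g x) ∧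
    (∃ Pb : Euc N → ℝ, ContinuousOn Pb (closure D) ∧ (∀ x ∈ D, Pb x = P x) ∧
      ∀ x ∈ frontier D, Pb x = 0) ∧
    (∃ Qb : Euc N → ℝ, ContinuousOn Qb (closure D) ∧ (∀ x ∈ D, Qb x = lap P x) ∧
      ∀ x ∈ frontier D, Qb x = 0)

/-- `Ω` has smooth boundary: near every boundary point, `Ω` is the sublevel set of a
smooth function with nonvanishing differential. -/
def HasSmoothBoundary {N : ℕ} (Ω : Set (Euc N)) : Prop :=
  ∀ x ∈ frontier Ω, ∃ g : Euc N → ℝ, ContDiff ℝ (⊤ : ℕ∞) g ∧ fderiv ℝ g x ≠ 0 ∧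
    ∀ᶠ y in nhds x, (y ∈ Ω ↔ g y < 0)

/-- The standard basis of `ℝ × ℝ^N`: the `d`-direction followed by the `τ`-directions. -/
def basisVec (N : ℕ) : Fin (N + 1) → ℝ × Euc N :=
  Fin.cases ((1 : ℝ), 0) (fun i => ((0 : ℝ), EuclideanSpace.single i (1 : ℝ)))

set_option synthInstance.maxHeartbeats 1000000
set_option maxHeartbeats 1000000
namespace St5

def gf (N : ℕ) (A s : ℝ) : ℝ := A * (2 * s + N) * (1 + s) ^ (-((N : ℝ) - 2))

def gd (N : ℕ) (A s : ℝ) : ℝ :=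
  A * 2 * (1 + s) ^ (-((N : ℝ) - 2)) +
    A * (2 * s + N) * (-((N : ℝ) - 2)) * (1 + s) ^ (-((N : ℝ) - 2) - 1)

lemma hasDerivAt_gf (N : ℕ) (A : ℝ) (s : ℝ) (hs : 0 ≤ s) :
    HasDerivAt (gf N A) (gd N A s) s := by
  have h0 : (1 : ℝ) + s ≠ 0 := by positivity
  have h1 : HasDerivAt (fun t : ℝ => 1 + t) 1 s := (hasDerivAt_id s).const_add 1
  have h2 := h1.rpow_const (p := -((N : ℝ) - 2)) (Or.inl h0)
  have h3 : HasDerivAt (fun t : ℝ => A * (2 * t + N)) (A * 2) s := by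
    have := (((hasDerivAt_id s).const_mul 2).add_const (N : ℝ)).const_mul A
    refine this.congr_deriv ?_
    ring
  rw [show gf N A = fun t : ℝ => A * (2 * t + N) * (1 + t) ^ (-((N : ℝ) - 2)) from rfl, gd]
  refine (h3.mul h2).congr_deriv ?_
  ring

lemma differentiableAt_gd (N : ℕ) (A : ℝ) (s : ℝ) (hs : 0 ≤ s) :
    DifferentiableAt ℝ (gd N A) s := by
  have h0 : (1 : ℝ) + s ≠ 0 := by positivity
  have h1 : HasDerivAt (fun t : ℝ => 1 + t) 1 s := (hasDerivAt_id s).const_add 1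
  have h2 := (h1.rpow_const (p := -((N : ℝ) - 2)) (Or.inl h0)).differentiableAt
  have h2' := (h1.rpow_const (p := -((N : ℝ) - 2) - 1) (Or.inl h0)).differentiableAt
  have h3 : DifferentiableAt ℝ (fun t : ℝ => A * (2 * t + N) * (-((N : ℝ) - 2))) s := by
    fun_prop
  exact (h2.const_mul (A * 2)).add (h3.mul h2')

variable {N : ℕ}

def fstL (N : ℕ) : ℝ × Euc N →L[ℝ] ℝ := ContinuousLinearMap.fst ℝ ℝ (Euc N)
def sndL (N : ℕ) : ℝ × Euc N →L[ℝ] Euc N := ContinuousLinearMap.snd ℝ ℝ (Euc N)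
def Ei (N : ℕ) (i : Fin N) : ℝ × Euc N →L[ℝ] ℝ :=
  (EuclideanSpace.proj i).comp (sndL N)
def Mdg (N : ℕ) : (ℝ × Euc N) →L[ℝ] ((ℝ × Euc N) →L[ℝ] ℝ) :=
  ∑ i, (Ei N i).smulRight (Ei N i)

@[simp] lemma fstL_apply (w : ℝ × Euc N) : fstL N w = w.1 := rfl
@[simp] lemma sndL_apply (w : ℝ × Euc N) : sndL N w = w.2 := rfl
@[simp] lemma Ei_apply (i : Fin N) (w : ℝ × Euc N) : Ei N i w = w.2 i := rfl

lemma Mdg_apply (p w : ℝ × Euc N) : Mdg N p w = ∑ i, p.2 i * w.2 i := by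
  simp [Mdg, ContinuousLinearMap.sum_apply, smul_eq_mul, mul_comm]

lemma Mdg_eq_inner (p w : ℝ × Euc N) :
    Mdg N p w = (inner ℝ p.2 w.2 : ℝ) := by
  rw [Mdg_apply, PiLp.inner_apply]
  simp [RCLike.inner_apply, starRingEnd_apply, mul_comm]

lemma Mdg_zero (d : ℝ) : Mdg N ((d, 0) : ℝ × Euc N) = 0 := by
  refine ContinuousLinearMap.ext fun w => ?_
  rw [Mdg_apply]
  simp

def Psi0 (N : ℕ) (A B : ℝ) (q : ℝ × Euc N) : ℝ :=
  gf N A (‖q.2‖ ^ 2) * q.1 ^ (-((N : ℝ) - 2)) + B * q.1 ^ ((N : ℝ) - 4)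

def Dm (N : ℕ) (A B : ℝ) (q : ℝ × Euc N) : (ℝ × Euc N) →L[ℝ] ℝ :=
  (gf N A (‖q.2‖ ^ 2) * (-((N : ℝ) - 2) * q.1 ^ (-((N : ℝ) - 2) - 1)) +
      B * (((N : ℝ) - 4) * q.1 ^ (((N : ℝ) - 4) - 1))) • fstL N +
    (2 * gd N A (‖q.2‖ ^ 2) * q.1 ^ (-((N : ℝ) - 2))) • Mdg N q

lemma hasFDerivAt_Psi0 (N : ℕ) (A B : ℝ) (q : ℝ × Euc N) (hq : 0 < q.1) :
    HasFDerivAt (Psi0 N A B) (Dm N A B q) q := by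
  have hs : HasFDerivAt (fun q : ℝ × Euc N => ‖q.2‖ ^ 2)
      ((2:ℕ) • (innerSL ℝ q.2).comp (sndL N)) q := by
    exact (hasFDerivAt_snd).norm_sq
  have hg : HasFDerivAt (fun q : ℝ × Euc N => gf N A (‖q.2‖ ^ 2))
      (gd N A (‖q.2‖ ^ 2) • ((2:ℕ) • (innerSL ℝ q.2).comp (sndL N))) q :=
    (hasDerivAt_gf N A _ (by positivity)).comp_hasFDerivAt q hs
  have hr : HasFDerivAt (fun q : ℝ × Euc N => q.1 ^ (-((N : ℝ) - 2)))
      ((-((N : ℝ) - 2) * q.1 ^ (-((N : ℝ) - 2) - 1)) • fstL N) q :=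
    (Real.hasDerivAt_rpow_const (Or.inl hq.ne')).comp_hasFDerivAt q hasFDerivAt_fst
  have he : HasFDerivAt (fun q : ℝ × Euc N => B * q.1 ^ ((N : ℝ) - 4))
      (B • ((((N : ℝ) - 4) * q.1 ^ (((N : ℝ) - 4) - 1)) • fstL N)) q :=
    ((Real.hasDerivAt_rpow_const (Or.inl hq.ne')).comp_hasFDerivAt q
      hasFDerivAt_fst).const_mul B
  have htot := (hg.mul hr).add he
  refine htot.congr_fderiv ?_
  refine ContinuousLinearMap.ext fun w => ?_
  simp only [Dm, ContinuousLinearMap.add_apply, ContinuousLinearMap.smul_apply,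
    ContinuousLinearMap.coe_smul', Pi.smul_apply, ContinuousLinearMap.coe_comp',
    Function.comp_apply, fstL_apply, sndL_apply, innerSL_apply_apply, smul_eq_mul,
    nsmul_eq_mul, Nat.cast_ofNat, Mdg_eq_inner]
  ring

def Hdd (N : ℕ) (A B dstar : ℝ) : ℝ :=
  gf N A 0 * (-((N : ℝ) - 2) * ((-((N : ℝ) - 2) - 1) * dstar ^ (-((N : ℝ) - 2) - 1 - 1))) +
    B * (((N : ℝ) - 4) * ((((N : ℝ) - 4) - 1) * dstar ^ (((N : ℝ) - 4) - 1 - 1)))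

def Htt (N : ℕ) (A dstar : ℝ) : ℝ := 2 * gd N A 0 * dstar ^ (-((N : ℝ) - 2))

def Hm (N : ℕ) (A B dstar : ℝ) : (ℝ × Euc N) →L[ℝ] ((ℝ × Euc N) →L[ℝ] ℝ) :=
  Hdd N A B dstar • ((fstL N).smulRight (fstL N)) + Htt N A dstar • Mdg N

lemma Hm_apply (A B dstar : ℝ) (w z : ℝ × Euc N) :
    Hm N A B dstar w z = Hdd N A B dstar * (w.1 * z.1) +
      Htt N A dstar * ∑ i, w.2 i * z.2 i := by
  simp [Hm, Mdg_apply, ContinuousLinearMap.smul_apply, ContinuousLinearMap.smulRight_apply,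
    smul_eq_mul, mul_assoc]

lemma hasFDerivAt_Dm (N : ℕ) (A B dstar : ℝ) (hd : 0 < dstar) :
    HasFDerivAt (Dm N A B) (Hm N A B dstar) ((dstar, 0) : ℝ × Euc N) := by
  set p0 : ℝ × Euc N := (dstar, 0) with hp0
  have hs0 : HasFDerivAt (fun q : ℝ × Euc N => ‖q.2‖ ^ 2)
      ((2:ℕ) • (innerSL ℝ (p0.2)).comp (sndL N)) p0 := (hasFDerivAt_snd).norm_sq
  have hg0 : HasFDerivAt (fun q : ℝ × Euc N => gf N A (‖q.2‖ ^ 2))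
      (0 : (ℝ × Euc N) →L[ℝ] ℝ) p0 := by
    have := (hasDerivAt_gf N A (‖p0.2‖ ^ 2) (by positivity)).comp_hasFDerivAt p0 hs0
    simpa [hp0, Function.comp_def] using this
  have hA1 : HasFDerivAt (fun q : ℝ × Euc N => -((N : ℝ) - 2) * q.1 ^ (-((N : ℝ) - 2) - 1))
      ((-((N : ℝ) - 2)) • (((-((N : ℝ) - 2) - 1) * dstar ^ (-((N : ℝ) - 2) - 1 - 1)) • fstL N))
      p0 :=
    ((Real.hasDerivAt_rpow_const (p := -((N : ℝ) - 2) - 1) (Or.inl hd.ne')).comp_hasFDerivAt p0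
      (hasFDerivAt_fst (𝕜 := ℝ) (p := p0))).const_mul (-((N : ℝ) - 2))
  have hB1 : HasFDerivAt (fun q : ℝ × Euc N => B * (((N : ℝ) - 4) * q.1 ^ (((N : ℝ) - 4) - 1)))
      (B • ((((N : ℝ) - 4)) • (((((N : ℝ) - 4) - 1) * dstar ^ (((N : ℝ) - 4) - 1 - 1)) • fstL N)))
      p0 :=
    (((Real.hasDerivAt_rpow_const (p := ((N : ℝ) - 4) - 1) (Or.inl hd.ne')).comp_hasFDerivAt p0
      (hasFDerivAt_fst (𝕜 := ℝ) (p := p0))).const_mul ((N : ℝ) - 4)).const_mul B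
  have hf1 := (hg0.mul hA1).add hB1
  have hf2d : DifferentiableAt ℝ
      (fun q : ℝ × Euc N => 2 * gd N A (‖q.2‖ ^ 2) * q.1 ^ (-((N : ℝ) - 2))) p0 := by
    have h1 : DifferentiableAt ℝ (fun q : ℝ × Euc N => gd N A (‖q.2‖ ^ 2)) p0 :=
      by have := (differentiableAt_gd N A (‖p0.2‖ ^ 2) (by positivity)).comp p0 hs0.differentiableAt
         exact this
    have h2 : DifferentiableAt ℝ (fun q : ℝ × Euc N => q.1 ^ (-((N : ℝ) - 2))) p0 :=
      by have := ((Real.hasDerivAt_rpow_const (p := -((N : ℝ) - 2)) (Or.inl hd.ne')).comp_hasFDerivAt p0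
           (hasFDerivAt_fst (𝕜 := ℝ) (p := p0))).differentiableAt
         exact this
    exact ((h1.const_mul 2).mul h2)
  have hf2 := hf2d.hasFDerivAt
  have hT2 := hf2.smul (Mdg N).hasFDerivAt
  have hT1 := hf1.smul (hasFDerivAt_const (fstL N) p0)
  have htot := hT1.add hT2
  refine htot.congr_fderiv ?_
  refine ContinuousLinearMap.ext fun w => ContinuousLinearMap.ext fun z => ?_
  rw [Hm_apply]
  simp only [ContinuousLinearMap.add_apply, ContinuousLinearMap.smul_apply,
    ContinuousLinearMap.smulRight_apply, ContinuousLinearMap.zero_apply,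
    ContinuousLinearMap.coe_smul', Pi.smul_apply, fstL_apply, smul_eq_mul,
    hp0, Mdg_zero, mul_zero, zero_mul, add_zero, zero_add, norm_zero,
    ne_eq, OfNat.ofNat_ne_zero, not_false_eq_true, zero_pow, Mdg_apply,
    ContinuousLinearMap.smul_apply]
  ring_nf
  rw [Hdd, Htt]
  ring
end St5

theorem statement5 (N : ℕ) (hN : 5 ≤ N) (A B : ℝ) (hA : 0 < A) (hB : 0 < B)
    (Ψ : ℝ × Euc N → ℝ)
    (hΨ : ∀ q : ℝ × Euc N, Ψ q =
      A * (2 * ‖q.2‖ ^ 2 + N) * (1 + ‖q.2‖ ^ 2) ^ (-((N : ℝ) - 2)) * q.1 ^ (-((N : ℝ) - 2)) +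
        B * q.1 ^ ((N : ℝ) - 4))
    (dstar : ℝ)
    (hdstar : dstar = ((N : ℝ) * ((N : ℝ) - 2) * A / (((N : ℝ) - 4) * B)) ^
      (1 / (2 * ((N : ℝ) - 3)))) :
    fderiv ℝ Ψ (dstar, 0) = 0 ∧
    Matrix.det (Matrix.of fun i j : Fin (N + 1) =>
      iteratedFDeriv ℝ 2 Ψ (dstar, 0) ![basisVec N i, basisVec N j]) ≠ 0 ∧
    0 < iteratedFDeriv ℝ 2 Ψ (dstar, 0) ![basisVec N 0, basisVec N 0] ∧
    (∀ i : Fin N,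
      iteratedFDeriv ℝ 2 Ψ (dstar, 0) ![basisVec N i.succ, basisVec N i.succ] < 0) ∧
    (∀ i : Fin N,
      iteratedFDeriv ℝ 2 Ψ (dstar, 0) ![basisVec N 0, basisVec N i.succ] = 0) := by
  have hNr : (5 : ℝ) ≤ (N : ℝ) := by exact_mod_cast hN
  have hB0 : B ≠ 0 := hB.ne'
  have hNe4 : ((N : ℝ) - 4) ≠ 0 := by intro h; nlinarith
  have hNpos : (0 : ℝ) < (N : ℝ) := by linarith
  have hX : 0 < (N : ℝ) * ((N : ℝ) - 2) * A / (((N : ℝ) - 4) * B) := by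
    apply div_pos
    · exact mul_pos (mul_pos hNpos (by linarith)) hA
    · exact mul_pos (by linarith) hB
  have hd : 0 < dstar := hdstar ▸ Real.rpow_pos_of_pos hX _
  have hdpow : dstar ^ (2 * ((N : ℝ) - 3)) =
      (N : ℝ) * ((N : ℝ) - 2) * A / (((N : ℝ) - 4) * B) := by
    rw [hdstar, ← Real.rpow_mul hX.le,
      show 1 / (2 * ((N : ℝ) - 3)) * (2 * ((N : ℝ) - 3)) = 1 by
        have : (2 : ℝ) * ((N : ℝ) - 3) ≠ 0 := by intro h; nlinarith
        field_simp
        exact div_self (by intro h; nlinarith),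
      Real.rpow_one]
  have hgf0 : St5.gf N A 0 = A * N := by simp [St5.gf]
  have hgd0 : St5.gd N A 0 = A * 2 + A * N * (-((N : ℝ) - 2)) := by
    simp [St5.gd]
  have key1 : St5.gf N A 0 * (-((N : ℝ) - 2) * dstar ^ (-((N : ℝ) - 2) - 1)) +
      B * (((N : ℝ) - 4) * dstar ^ (((N : ℝ) - 4) - 1)) = 0 := by
    have h1 : dstar ^ (((N : ℝ) - 4) - 1) =
        dstar ^ (2 * ((N : ℝ) - 3)) * dstar ^ (-((N : ℝ) - 2) - 1) := by
      rw [← Real.rpow_add hd]; congr 1; ring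
    rw [hgf0, h1, hdpow]
    field_simp
    ring
  have hΨeq : Ψ = St5.Psi0 N A B := funext fun q => by rw [hΨ q]; rfl
  have hDp0 : St5.Dm N A B ((dstar, 0) : ℝ × Euc N) = 0 := by
    rw [St5.Dm, St5.Mdg_zero]
    simp only [norm_zero, ne_eq, OfNat.ofNat_ne_zero, not_false_eq_true, zero_pow, smul_zero]
    rw [key1]
    simp
  have hder1 : fderiv ℝ Ψ (dstar, 0) = 0 := by
    rw [hΨeq, (St5.hasFDerivAt_Psi0 N A B ((dstar, 0) : ℝ × Euc N) hd).fderiv, hDp0]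
  have hev : fderiv ℝ Ψ =ᶠ[nhds ((dstar, 0) : ℝ × Euc N)] St5.Dm N A B := by
    have hU : IsOpen {q : ℝ × Euc N | 0 < q.1} := isOpen_Ioi.preimage continuous_fst
    filter_upwards [hU.mem_nhds (show (0:ℝ) < dstar from hd)] with q hq
    rw [hΨeq]
    exact (St5.hasFDerivAt_Psi0 N A B q hq).fderiv
  have hfd2 : fderiv ℝ (fderiv ℝ Ψ) ((dstar, 0) : ℝ × Euc N) = St5.Hm N A B dstar := by
    rw [hev.fderiv_eq]
    exact (St5.hasFDerivAt_Dm N A B dstar hd).fderiv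
  have hit : ∀ a b : ℝ × Euc N, iteratedFDeriv ℝ 2 Ψ ((dstar, 0) : ℝ × Euc N) ![a, b] =
      St5.Hdd N A B dstar * (a.1 * b.1) + St5.Htt N A dstar * ∑ i, a.2 i * b.2 i := by
    intro a b
    rw [iteratedFDeriv_two_apply, hfd2]
    simp only [Matrix.cons_val_zero, Matrix.cons_val_one, Matrix.head_cons]
    exact St5.Hm_apply A B dstar a b
  have hb0 : basisVec N (0 : Fin (N+1)) = ((1 : ℝ), (0 : Euc N)) := rfl
  have hbs : ∀ i : Fin N, basisVec N i.succ = ((0 : ℝ), EuclideanSpace.single i (1 : ℝ)) :=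
    fun i => by simp [basisVec]
  have hP1 : 0 < dstar ^ (-((N : ℝ) - 2) - 1 - 1) := Real.rpow_pos_of_pos hd _
  have hP2 : 0 < dstar ^ (((N : ℝ) - 4) - 1 - 1) := Real.rpow_pos_of_pos hd _
  have hP3 : 0 < dstar ^ (-((N : ℝ) - 2)) := Real.rpow_pos_of_pos hd _
  have hHdd : 0 < St5.Hdd N A B dstar := by
    rw [St5.Hdd, hgf0]
    have e1 : A * ↑N * (-((N : ℝ) - 2) * ((-((N : ℝ) - 2) - 1) *
        dstar ^ (-((N : ℝ) - 2) - 1 - 1))) =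
        (A * ↑N * (((N : ℝ) - 2) * ((N : ℝ) - 1))) * dstar ^ (-((N : ℝ) - 2) - 1 - 1) := by
      ring
    have e2 : B * (((N : ℝ) - 4) * ((((N : ℝ) - 4) - 1) * dstar ^ (((N : ℝ) - 4) - 1 - 1))) =
        (B * (((N : ℝ) - 4) * (((N : ℝ) - 5)))) * dstar ^ (((N : ℝ) - 4) - 1 - 1) := by
      ring
    rw [e1, e2]
    have t1 : 0 < A * ↑N * (((N : ℝ) - 2) * ((N : ℝ) - 1)) :=
      mul_pos (mul_pos hA hNpos) (mul_pos (by linarith) (by linarith))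
    have t2 : 0 ≤ B * (((N : ℝ) - 4) * ((N : ℝ) - 5)) :=
      mul_nonneg hB.le (mul_nonneg (by linarith) (by linarith))
    have := mul_pos t1 hP1
    have := mul_nonneg t2 hP2.le
    linarith
  have hHtt : St5.Htt N A dstar < 0 := by
    rw [St5.Htt, hgd0]
    have hq : (0:ℝ) ≤ ((N:ℝ) - 5) * ((N:ℝ) + 3) := mul_nonneg (by linarith) (by linarith)
    have t1 : 2 * (A * 2 + A * ↑N * (-((N : ℝ) - 2))) < 0 := by
      nlinarith [mul_pos hA (show (0:ℝ) < ↑N * ((N:ℝ) - 2) - 2 by nlinarith)]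
    exact mul_neg_of_neg_of_pos t1 hP3
  have hdiag : ∀ i : Fin N, iteratedFDeriv ℝ 2 Ψ ((dstar, 0) : ℝ × Euc N)
      ![basisVec N i.succ, basisVec N i.succ] = St5.Htt N A dstar := by
    intro i
    rw [hit, hbs]
    simp [EuclideanSpace.single_apply]
  have hmix : ∀ i : Fin N, iteratedFDeriv ℝ 2 Ψ ((dstar, 0) : ℝ × Euc N)
      ![basisVec N 0, basisVec N i.succ] = 0 := by
    intro i
    rw [hit, hb0, hbs]
    simp
  have hd00 : iteratedFDeriv ℝ 2 Ψ ((dstar, 0) : ℝ × Euc N)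
      ![basisVec N 0, basisVec N 0] = St5.Hdd N A B dstar := by
    rw [hit, hb0]
    simp
  refine ⟨hder1, ?_, ?_, ?_, ?_⟩
  · have hmat : (Matrix.of fun i j : Fin (N + 1) =>
        iteratedFDeriv ℝ 2 Ψ (dstar, 0) ![basisVec N i, basisVec N j]) =
        Matrix.diagonal (Fin.cases (St5.Hdd N A B dstar) (fun _ => St5.Htt N A dstar)) := by
      ext i j
      rw [Matrix.of_apply]
      induction i using Fin.cases with
      | zero =>
        induction j using Fin.cases with
        | zero => rw [Matrix.diagonal_apply_eq, hd00]; simp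
        | succ j =>
          rw [Matrix.diagonal_apply_ne _ (Fin.succ_ne_zero j).symm]
          exact hmix j
      | succ i =>
        induction j using Fin.cases with
        | zero =>
          rw [Matrix.diagonal_apply_ne _ (Fin.succ_ne_zero i)]
          rw [hit, hb0, hbs]
          simp
        | succ j =>
          by_cases hij : i = j
          · subst hij
            rw [Matrix.diagonal_apply_eq, hdiag i]
            simp
          · rw [Matrix.diagonal_apply_ne _ (by simpa [Fin.succ_inj] using hij)]
            rw [hit, hbs, hbs]
            simp only [EuclideanSpace.single_apply]
            rw [show (St5.Hdd N A B dstar) * ((0:ℝ) * 0) = 0 by ring, zero_add]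
            rw [Finset.sum_eq_zero, mul_zero]
            intro k _
            rcases eq_or_ne k i with rfl | hk
            · simp [hij]
            · simp [hk]
    rw [hmat, Matrix.det_diagonal, Fin.prod_univ_succ]
    simp only [Fin.cases_zero, Fin.cases_succ, Finset.prod_const, Finset.card_univ,
      Fintype.card_fin]
    exact mul_ne_zero hHdd.ne' (pow_ne_zero _ hHtt.ne)
  · rw [hd00]; exact hHdd
  · intro i; rw [hdiag i]; exact hHtt
  · exact hmix
end
end

section
/- Let N ≥ 5 be an integer, p := (N+4)/(N−4), α_N := (N(N−4)(N−2)(N+2))^{(N−4)/8}. For every μ > 0 and ξ ∈ ℝ^N, the function U_{μ,ξ}(x) := α_N (μ/(μ² + |x−ξ|²))^{(N−4)/2} is smooth and strictly positive on ℝ^N and satisfies Δ(ΔU_{μ,ξ})(x) = U_{μ,ξ}(x)^p for every x ∈ ℝ^N. -/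
open scoped ENNReal
open MeasureTheory Filter Metric Set

noncomputable section

-- Auxiliary lemmas

lemma norm_expand {N : ℕ} (v : Euc N) (i : Fin N) (t : ℝ) :
    ‖v + t • EuclideanSpace.single i (1:ℝ)‖^2 = ‖v‖^2 + 2*(v i)*t + t^2 := by
  have h1 : (inner ℝ v (EuclideanSpace.single i (1:ℝ)) : ℝ) = v i := by
    rw [EuclideanSpace.inner_single_right]; simp
  rw [norm_add_sq_real, real_inner_smul_right, h1, norm_smul, EuclideanSpace.norm_single]
  simp only [Real.norm_eq_abs, mul_pow, sq_abs, abs_one]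
  ring

lemma norm_sq_sum {N : ℕ} (v : Euc N) : ‖v‖^2 = ∑ i, (v i)^2 := by
  rw [PiLp.norm_sq_eq_of_L2]
  simp [Real.norm_eq_abs, sq_abs]

lemma hasDerivAt_q (s a t : ℝ) : HasDerivAt (fun t : ℝ => s + 2*a*t + t^2) (2*a + 2*t) t := by
  have h1 : HasDerivAt (fun t : ℝ => s + 2*a*t) (2*a) t := by
    simpa using ((hasDerivAt_id t).const_mul (2*a)).const_add s
  have h2 : HasDerivAt (fun t : ℝ => t^2) (2*t) t := by
    simpa using hasDerivAt_pow 2 t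
  exact h1.add h2

lemma oneD (c e a s : ℝ) (hs : ∀ t : ℝ, 0 < s + 2*a*t + t^2) :
    iteratedDeriv 2 (fun t : ℝ => c * (s + 2*a*t + t^2) ^ e) 0
      = c * e * ((e-1) * s ^ (e-2) * (2*a)^2 + s ^ (e-1) * 2) := by
  have hd : ∀ t : ℝ, HasDerivAt (fun t : ℝ => c * (s + 2*a*t + t^2) ^ e)
      (c * e * ((s + 2*a*t + t^2) ^ (e-1) * (2*a + 2*t))) t := by
    intro t
    have := (((hasDerivAt_q s a t).rpow_const (p := e) (Or.inl (hs t).ne')).const_mul c)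
    refine this.congr_deriv ?_
    ring
  have hderiv : deriv (fun t : ℝ => c * (s + 2*a*t + t^2) ^ e)
      = fun t => (c * e) * ((s + 2*a*t + t^2) ^ (e-1) * (2*a + 2*t)) :=
    funext fun t => (hd t).deriv
  have hg : HasDerivAt (fun t : ℝ => (s + 2*a*t + t^2) ^ (e-1))
      ((2*a + 2*0) * (e-1) * (s + 2*a*0 + 0^2) ^ (e-1-1)) 0 :=
    (hasDerivAt_q s a 0).rpow_const (p := e-1) (Or.inl (hs 0).ne')
  have hh : HasDerivAt (fun t : ℝ => 2*a + 2*t) 2 0 := by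
    simpa using ((hasDerivAt_id (0:ℝ)).const_mul 2).const_add (2*a)
  have h2 : deriv (fun t : ℝ => (c*e) * ((s + 2*a*t + t^2) ^ (e-1) * (2*a + 2*t))) 0 = _ :=
    ((hg.mul hh).const_mul (c*e)).deriv
  have e2 : iteratedDeriv 2 (fun t : ℝ => c * (s + 2*a*t + t^2) ^ e)
      = deriv (deriv (fun t : ℝ => c * (s + 2*a*t + t^2) ^ e)) := by
    rw [show (2:ℕ) = 1+1 from rfl, iteratedDeriv_succ, iteratedDeriv_one]
  rw [e2, hderiv, h2]
  rw [show e-1-1 = e-2 by ring, show s+2*a*0+0^2 = s by ring]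
  ring

lemma lap_P {N : ℕ} (b c e : ℝ) (hb : 0 < b) (ξ x : Euc N) :
    lap (fun y => c * (b + ‖y - ξ‖^2) ^ e) x
      = (c*e*(2*(N:ℝ) + 4*(e-1))) * (b + ‖x-ξ‖^2) ^ (e-1)
        + (-(4*b*c*e*(e-1))) * (b + ‖x-ξ‖^2) ^ (e-2) := by
  have hpos : ∀ (i : Fin N) (t : ℝ),
      0 < (b + ‖x-ξ‖^2) + 2*((x-ξ) i)*t + t^2 := by
    intro i t
    have : (b + ‖x-ξ‖^2) + 2*((x-ξ) i)*t + t^2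
        = b + ‖(x-ξ) + t • EuclideanSpace.single i (1:ℝ)‖^2 := by
      rw [norm_expand]; ring
    rw [this]; positivity
  have key : ∀ i : Fin N,
      iteratedDeriv 2 (fun t : ℝ => c * (b + ‖x + t • EuclideanSpace.single i (1:ℝ) - ξ‖^2) ^ e) 0
        = c*e*((e-1) * (b+‖x-ξ‖^2)^(e-2) * (2*((x-ξ) i))^2 + (b+‖x-ξ‖^2)^(e-1) * 2) := by
    intro i
    have hfun : (fun t : ℝ => c * (b + ‖x + t • EuclideanSpace.single i (1:ℝ) - ξ‖^2) ^ e)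
        = fun t : ℝ => c * ((b + ‖x-ξ‖^2) + 2*((x-ξ) i)*t + t^2) ^ e := by
      funext t
      have hx : x + t • EuclideanSpace.single i (1:ℝ) - ξ
          = (x - ξ) + t • EuclideanSpace.single i (1:ℝ) := by abel
      rw [hx, norm_expand]
      ring_nf
    rw [hfun]
    exact oneD c e _ _ (hpos i)
  unfold lap
  rw [Finset.sum_congr rfl (fun i _ => key i)]
  have step : ∀ i ∈ Finset.univ, c*e*((e-1) * (b+‖x-ξ‖^2)^(e-2) * (2*((x-ξ) i))^2 + (b+‖x-ξ‖^2)^(e-1) * 2)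
      = (c*e*(e-1)*(b+‖x-ξ‖^2)^(e-2)*4) * ((x-ξ) i)^2 + c*e*(b+‖x-ξ‖^2)^(e-1)*2 := by
    intro i _
    ring
  rw [Finset.sum_congr rfl step, Finset.sum_add_distrib, ← Finset.mul_sum, ← norm_sq_sum,
    Finset.sum_const, Finset.card_univ, Fintype.card_fin, nsmul_eq_mul]
  have hS : (0:ℝ) < b + ‖x-ξ‖^2 := by positivity
  have hSe : (b + ‖x-ξ‖^2) ^ (e-1) = (b + ‖x-ξ‖^2) ^ (e-2) * (b + ‖x-ξ‖^2) := by
    rw [show e-1 = (e-2)+1 by ring, Real.rpow_add_one hS.ne']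
  have hnorm : ‖x-ξ‖^2 = (b + ‖x-ξ‖^2) - b := by ring
  rw [hSe]
  nth_rewrite 1 [hnorm]
  ring

lemma oneD2 (c₁ e₁ c₂ e₂ a s : ℝ) (hs : ∀ t : ℝ, 0 < s + 2*a*t + t^2) :
    iteratedDeriv 2 (fun t : ℝ => c₁ * (s + 2*a*t + t^2) ^ e₁ + c₂ * (s + 2*a*t + t^2) ^ e₂) 0
      = c₁ * e₁ * ((e₁-1) * s ^ (e₁-2) * (2*a)^2 + s ^ (e₁-1) * 2)
        + c₂ * e₂ * ((e₂-1) * s ^ (e₂-2) * (2*a)^2 + s ^ (e₂-1) * 2) := by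
  have hd : ∀ t : ℝ, HasDerivAt
      (fun t : ℝ => c₁ * (s + 2*a*t + t^2) ^ e₁ + c₂ * (s + 2*a*t + t^2) ^ e₂)
      ((c₁ * e₁) * ((s + 2*a*t + t^2) ^ (e₁-1) * (2*a + 2*t))
        + (c₂ * e₂) * ((s + 2*a*t + t^2) ^ (e₂-1) * (2*a + 2*t))) t := by
    intro t
    have h1 := (((hasDerivAt_q s a t).rpow_const (p := e₁) (Or.inl (hs t).ne')).const_mul c₁)
    have h2 := (((hasDerivAt_q s a t).rpow_const (p := e₂) (Or.inl (hs t).ne')).const_mul c₂)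
    refine (h1.add h2).congr_deriv ?_
    ring
  have hderiv : deriv (fun t : ℝ => c₁ * (s + 2*a*t + t^2) ^ e₁ + c₂ * (s + 2*a*t + t^2) ^ e₂)
      = fun t => (c₁ * e₁) * ((s + 2*a*t + t^2) ^ (e₁-1) * (2*a + 2*t))
        + (c₂ * e₂) * ((s + 2*a*t + t^2) ^ (e₂-1) * (2*a + 2*t)) :=
    funext fun t => (hd t).deriv
  have hh : HasDerivAt (fun t : ℝ => 2*a + 2*t) 2 0 := by
    simpa using ((hasDerivAt_id (0:ℝ)).const_mul 2).const_add (2*a)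
  have hg1 : HasDerivAt (fun t : ℝ => (s + 2*a*t + t^2) ^ (e₁-1))
      ((2*a + 2*0) * (e₁-1) * (s + 2*a*0 + 0^2) ^ (e₁-1-1)) 0 :=
    (hasDerivAt_q s a 0).rpow_const (p := e₁-1) (Or.inl (hs 0).ne')
  have hg2 : HasDerivAt (fun t : ℝ => (s + 2*a*t + t^2) ^ (e₂-1))
      ((2*a + 2*0) * (e₂-1) * (s + 2*a*0 + 0^2) ^ (e₂-1-1)) 0 :=
    (hasDerivAt_q s a 0).rpow_const (p := e₂-1) (Or.inl (hs 0).ne')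
  have h2 : deriv (fun t : ℝ => (c₁ * e₁) * ((s + 2*a*t + t^2) ^ (e₁-1) * (2*a + 2*t))
        + (c₂ * e₂) * ((s + 2*a*t + t^2) ^ (e₂-1) * (2*a + 2*t))) 0 = _ :=
    (((hg1.mul hh).const_mul (c₁*e₁)).add ((hg2.mul hh).const_mul (c₂*e₂))).deriv
  have e2 : iteratedDeriv 2
      (fun t : ℝ => c₁ * (s + 2*a*t + t^2) ^ e₁ + c₂ * (s + 2*a*t + t^2) ^ e₂)
      = deriv (deriv (fun t : ℝ => c₁ * (s + 2*a*t + t^2) ^ e₁ + c₂ * (s + 2*a*t + t^2) ^ e₂)) := by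
    rw [show (2:ℕ) = 1+1 from rfl, iteratedDeriv_succ, iteratedDeriv_one]
  rw [e2, hderiv, h2]
  rw [show e₁-1-1 = e₁-2 by ring, show e₂-1-1 = e₂-2 by ring, show s+2*a*0+0^2 = s by ring]
  ring

lemma lap_P2 {N : ℕ} (b c₁ e₁ c₂ e₂ : ℝ) (hb : 0 < b) (ξ x : Euc N) :
    lap (fun y => c₁ * (b + ‖y - ξ‖^2) ^ e₁ + c₂ * (b + ‖y - ξ‖^2) ^ e₂) x
      = (c₁*e₁*(2*(N:ℝ) + 4*(e₁-1))) * (b + ‖x-ξ‖^2) ^ (e₁-1)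
        + (-(4*b*c₁*e₁*(e₁-1))) * (b + ‖x-ξ‖^2) ^ (e₁-2)
        + (c₂*e₂*(2*(N:ℝ) + 4*(e₂-1))) * (b + ‖x-ξ‖^2) ^ (e₂-1)
        + (-(4*b*c₂*e₂*(e₂-1))) * (b + ‖x-ξ‖^2) ^ (e₂-2) := by
  have hpos : ∀ (i : Fin N) (t : ℝ),
      0 < (b + ‖x-ξ‖^2) + 2*((x-ξ) i)*t + t^2 := by
    intro i t
    have : (b + ‖x-ξ‖^2) + 2*((x-ξ) i)*t + t^2
        = b + ‖(x-ξ) + t • EuclideanSpace.single i (1:ℝ)‖^2 := by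
      rw [norm_expand]; ring
    rw [this]; positivity
  have key : ∀ i : Fin N,
      iteratedDeriv 2 (fun t : ℝ =>
        c₁ * (b + ‖x + t • EuclideanSpace.single i (1:ℝ) - ξ‖^2) ^ e₁
        + c₂ * (b + ‖x + t • EuclideanSpace.single i (1:ℝ) - ξ‖^2) ^ e₂) 0
        = c₁*e₁*((e₁-1) * (b+‖x-ξ‖^2)^(e₁-2) * (2*((x-ξ) i))^2 + (b+‖x-ξ‖^2)^(e₁-1) * 2)
          + c₂*e₂*((e₂-1) * (b+‖x-ξ‖^2)^(e₂-2) * (2*((x-ξ) i))^2 + (b+‖x-ξ‖^2)^(e₂-1) * 2) := by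
    intro i
    have hfun : (fun t : ℝ =>
        c₁ * (b + ‖x + t • EuclideanSpace.single i (1:ℝ) - ξ‖^2) ^ e₁
        + c₂ * (b + ‖x + t • EuclideanSpace.single i (1:ℝ) - ξ‖^2) ^ e₂)
        = fun t : ℝ => c₁ * ((b + ‖x-ξ‖^2) + 2*((x-ξ) i)*t + t^2) ^ e₁
          + c₂ * ((b + ‖x-ξ‖^2) + 2*((x-ξ) i)*t + t^2) ^ e₂ := by
      funext t
      have hx : x + t • EuclideanSpace.single i (1:ℝ) - ξ
          = (x - ξ) + t • EuclideanSpace.single i (1:ℝ) := by abel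
      rw [hx, norm_expand]
      ring_nf
    rw [hfun]
    exact oneD2 c₁ e₁ c₂ e₂ _ _ (hpos i)
  unfold lap
  rw [Finset.sum_congr rfl (fun i _ => key i)]
  have step : ∀ i ∈ Finset.univ,
      c₁*e₁*((e₁-1) * (b+‖x-ξ‖^2)^(e₁-2) * (2*((x-ξ) i))^2 + (b+‖x-ξ‖^2)^(e₁-1) * 2)
        + c₂*e₂*((e₂-1) * (b+‖x-ξ‖^2)^(e₂-2) * (2*((x-ξ) i))^2 + (b+‖x-ξ‖^2)^(e₂-1) * 2)
      = (c₁*e₁*(e₁-1)*(b+‖x-ξ‖^2)^(e₁-2)*4 + c₂*e₂*(e₂-1)*(b+‖x-ξ‖^2)^(e₂-2)*4) * ((x-ξ) i)^2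
        + (c₁*e₁*(b+‖x-ξ‖^2)^(e₁-1)*2 + c₂*e₂*(b+‖x-ξ‖^2)^(e₂-1)*2) := by
    intro i _
    ring
  rw [Finset.sum_congr rfl step, Finset.sum_add_distrib, ← Finset.mul_sum, ← norm_sq_sum,
    Finset.sum_const, Finset.card_univ, Fintype.card_fin, nsmul_eq_mul]
  have hS : (0:ℝ) < b + ‖x-ξ‖^2 := by positivity
  have hSe1 : (b + ‖x-ξ‖^2) ^ (e₁-1) = (b + ‖x-ξ‖^2) ^ (e₁-2) * (b + ‖x-ξ‖^2) := by
    rw [show e₁-1 = (e₁-2)+1 by ring, Real.rpow_add_one hS.ne']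
  have hSe2 : (b + ‖x-ξ‖^2) ^ (e₂-1) = (b + ‖x-ξ‖^2) ^ (e₂-2) * (b + ‖x-ξ‖^2) := by
    rw [show e₂-1 = (e₂-2)+1 by ring, Real.rpow_add_one hS.ne']
  have hnorm : ‖x-ξ‖^2 = (b + ‖x-ξ‖^2) - b := by ring
  rw [hSe1, hSe2]
  nth_rewrite 1 [hnorm]
  ring


theorem statement6 (N : ℕ) (hN : 5 ≤ N) (μ : ℝ) (hμ : 0 < μ) (ξ : Euc N) :
    ContDiff ℝ (⊤ : ℕ∞) (bubble N μ ξ) ∧ (∀ x : Euc N, 0 < bubble N μ ξ x) ∧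
      ∀ x : Euc N, bilap (bubble N μ ξ) x = bubble N μ ξ x ^ critExp N := by
  have hn : (5:ℝ) ≤ (N:ℝ) := by exact_mod_cast hN
  have hK : (0:ℝ) < (N:ℝ)*((N:ℝ)-4)*((N:ℝ)-2)*((N:ℝ)+2) := by
    have h1 : (0:ℝ) < (N:ℝ) := by linarith
    have h2 : (0:ℝ) < (N:ℝ)-4 := by linarith
    have h3 : (0:ℝ) < (N:ℝ)-2 := by linarith
    have h4 : (0:ℝ) < (N:ℝ)+2 := by linarith
    positivity
  have hα : 0 < alphaN N := Real.rpow_pos_of_pos hK _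
  have hc₀ : 0 < alphaN N * μ ^ (((N:ℝ)-4)/2) := by positivity
  have hbub : bubble N μ ξ
      = fun x => (alphaN N * μ ^ (((N:ℝ)-4)/2)) * (μ^2 + ‖x-ξ‖^2) ^ ((4-(N:ℝ))/2) := by
    funext x
    have hX : (0:ℝ) < μ^2 + ‖x-ξ‖^2 := by positivity
    unfold bubble
    rw [Real.div_rpow hμ.le hX.le, div_eq_mul_inv, ← Real.rpow_neg hX.le,
      show -(((N:ℝ)-4)/2) = (4-(N:ℝ))/2 by ring]
    ring
  have hsm : ContDiff ℝ (⊤ : ℕ∞) (bubble N μ ξ) := by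
    rw [hbub]
    apply contDiff_const.mul
    refine contDiff_iff_contDiffAt.2 fun x => ?_
    have hbase : ContDiffAt ℝ (⊤:ℕ∞) (fun x : Euc N => μ^2 + ‖x-ξ‖^2) x :=
      (contDiff_const.add ((contDiff_id.sub contDiff_const).norm_sq ℝ)).contDiffAt
    exact hbase.rpow_const_of_ne (by positivity)
  have hpos : ∀ x : Euc N, 0 < bubble N μ ξ x := by
    intro x
    simp only [hbub]
    have hX : (0:ℝ) < μ^2 + ‖x-ξ‖^2 := by positivity
    positivity
  have hcp : (alphaN N * μ ^ (((N:ℝ)-4)/2)) ^ (((N:ℝ)+4)/((N:ℝ)-4))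
      = ((N:ℝ)*((N:ℝ)-4)*((N:ℝ)-2)*((N:ℝ)+2)) * μ^2 * μ^2
        * (alphaN N * μ ^ (((N:ℝ)-4)/2)) := by
    have h4 : (N:ℝ) - 4 ≠ 0 := by
      have : (0:ℝ) < (N:ℝ)-4 := by linarith
      exact this.ne'
    unfold alphaN
    rw [Real.mul_rpow (Real.rpow_pos_of_pos hK _).le (Real.rpow_pos_of_pos hμ _).le,
      ← Real.rpow_mul hK.le, ← Real.rpow_mul hμ.le,
      show ((N:ℝ)-4)/8 * (((N:ℝ)+4)/((N:ℝ)-4)) = ((N:ℝ)-4)/8 + 1 by field_simp; ring,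
      show ((N:ℝ)-4)/2 * (((N:ℝ)+4)/((N:ℝ)-4)) = ((N:ℝ)-4)/2 + (4:ℝ) by field_simp; ring,
      Real.rpow_add hK, Real.rpow_add hμ, Real.rpow_one,
      show (4:ℝ) = ((4:ℕ):ℝ) by norm_num, Real.rpow_natCast]
    ring
  refine ⟨hsm, hpos, ?_⟩
  intro x
  have hb : (0:ℝ) < μ^2 := by positivity
  have hX : (0:ℝ) < μ^2 + ‖x-ξ‖^2 := by positivity
  have hlap : lap (bubble N μ ξ) = fun y =>
      ((alphaN N * μ ^ (((N:ℝ)-4)/2))*((4-(N:ℝ))/2)*(2*(N:ℝ) + 4*((4-(N:ℝ))/2-1)))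
        * (μ^2 + ‖y-ξ‖^2) ^ ((4-(N:ℝ))/2-1)
      + (-(4*(μ^2)*(alphaN N * μ ^ (((N:ℝ)-4)/2))*((4-(N:ℝ))/2)*((4-(N:ℝ))/2-1)))
        * (μ^2 + ‖y-ξ‖^2) ^ ((4-(N:ℝ))/2-2) := by
    funext y
    rw [hbub]
    exact lap_P (μ^2) _ _ hb ξ y
  rw [show bilap (bubble N μ ξ) = lap (lap (bubble N μ ξ)) from rfl, hlap,
    lap_P2 (μ^2) _ ((4-(N:ℝ))/2-1) _ ((4-(N:ℝ))/2-2) hb ξ x]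
  simp only [hbub, critExp]
  rw [Real.mul_rpow hc₀.le (Real.rpow_nonneg hX.le _), ← Real.rpow_mul hX.le,
    show ((4-(N:ℝ))/2) * (((N:ℝ)+4)/((N:ℝ)-4)) = (4-(N:ℝ))/2 - 4 by
      have h4 : (N:ℝ) - 4 ≠ 0 := by
        have : (0:ℝ) < (N:ℝ)-4 := by linarith
        exact this.ne'
      field_simp; ring,
    hcp]
  rw [show (4-(N:ℝ))/2 - 1 - 1 = (4-(N:ℝ))/2 - 2 by ring,
    show (4-(N:ℝ))/2 - 1 - 2 = (4-(N:ℝ))/2 - 3 by ring,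
    show (4-(N:ℝ))/2 - 2 - 1 = (4-(N:ℝ))/2 - 3 by ring,
    show (4-(N:ℝ))/2 - 2 - 2 = (4-(N:ℝ))/2 - 4 by ring]
  ring
end
end

section
/- Let N ≥ 5 be an integer, let Ω ⊂ ℝ^N be a bounded open set containing 0, let δ > 0, and set σ := (N−2)/(2(N−3)) and α_N := (N(N−4)(N−2)(N+2))^{(N−4)/8}. Then there exist ε₀ > 0 and C > 0 such that for every ε ∈ (0, ε₀), every d ∈ [δ, 1/δ] and every τ ∈ ℝ^N with |τ| ≤ 1/δ, setting μ := d ε^σ and ξ := μτ, one has | ∫_{Ω \ closure(B(0,ε))} U_{μ,ξ}(x)^{2N/(N−4)} dx − α_N^{2N/(N−4)} ∫_{ℝ^N} (1 + |y|²)^{−N} dy | ≤ C ( (ε/μ)^N + μ^N ). -/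
open scoped ENNReal
open MeasureTheory Filter Metric Set

noncomputable section

set_option maxHeartbeats 1000000


lemma aux_integrable (N : ℕ) (hN : 1 ≤ N) :
    Integrable (fun y : Euc N => (1 + ‖y‖ ^ 2) ^ (-(N : ℝ))) := by
  have h2 : ((Module.finrank ℝ (Euc N) : ℝ)) < 2 * N := by
    simp only [finrank_euclideanSpace_fin]
    have : (1:ℝ) ≤ N := by exact_mod_cast hN
    linarith
  have h := integrable_rpow_neg_one_add_norm_sq (μ := (volume : Measure (Euc N))) h2
  simpa [show (-(2*(N:ℝ))/2) = -(N:ℝ) by ring] using h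

lemma aux_comp_smul_add (N : ℕ) (g : Euc N → ℝ) {c : ℝ} (hc : 0 < c) (v : Euc N) :
    ∫ x : Euc N, g (c • x + v) = (c ^ N)⁻¹ * ∫ x, g x := by
  have h1 := MeasureTheory.Measure.integral_comp_smul (volume : Measure (Euc N))
      (fun y => g (y + v)) c
  rw [MeasureTheory.integral_add_right_eq_self (μ := (volume : Measure (Euc N))) g v] at h1
  simpa [finrank_euclideanSpace_fin, smul_eq_mul,
    abs_of_nonneg (inv_nonneg.2 (pow_nonneg hc.le N))] using h1

lemma aux_scale (N : ℕ) (f : Euc N → ℝ) {S : Set (Euc N)} (hS : MeasurableSet S)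
    {c : ℝ} (hc : 0 < c) (v : Euc N) :
    ∫ x in S, f (c⁻¹ • (x - v)) = c ^ N * ∫ x in {x | c • x + v ∈ S}, f x := by
  have hT : MeasurableSet {x : Euc N | c • x + v ∈ S} :=
    hS.preimage (((continuous_id.const_smul c).add continuous_const).measurable)
  rw [← integral_indicator hS, ← integral_indicator hT]
  have key := aux_comp_smul_add N (S.indicator (fun x => f (c⁻¹ • (x - v)))) hc v
  have hpt : (fun x => S.indicator (fun x => f (c⁻¹ • (x - v))) (c • x + v))
      = Set.indicator {x : Euc N | c • x + v ∈ S} f := by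
    funext x
    by_cases hx : c • x + v ∈ S
    · simp only [Set.indicator_of_mem hx, Set.indicator_of_mem (show x ∈ {x | c • x + v ∈ S} from hx)]
      congr 1
      rw [add_sub_cancel_right, smul_smul, inv_mul_cancel₀ hc.ne', one_smul]
    · simp [Set.indicator_of_notMem hx, Set.indicator_of_notMem (show x ∉ {x | c • x + v ∈ S} from hx)]
  rw [hpt] at key
  rw [key]
  field_simp

lemma aux_h_int (N : ℕ) (hN : 1 ≤ N) :
    IntegrableOn (fun x : Euc N => (‖x‖ ^ 2) ^ (-(N:ℝ))) {x : Euc N | 1 ≤ ‖x‖} := by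
  have hf := ((aux_integrable N hN).const_mul ((2:ℝ)^N)).restrict
      (s := {x : Euc N | 1 ≤ ‖x‖})
  refine hf.mono' ?_ ?_
  · apply Measurable.aestronglyMeasurable
    fun_prop
  · have hmeas : MeasurableSet {x : Euc N | 1 ≤ ‖x‖} :=
      (isClosed_le continuous_const continuous_norm).measurableSet
    rw [ae_restrict_iff' hmeas]
    refine ae_of_all _ fun x hx => ?_
    have hx1 : (1:ℝ) ≤ ‖x‖ := hx
    have h2 : (0:ℝ) < (1 + ‖x‖ ^ 2) / 2 := by positivity
    have h1 : (1 + ‖x‖ ^ 2) / 2 ≤ ‖x‖ ^ 2 := by nlinarith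
    have hle := Real.rpow_le_rpow_of_nonpos h2 h1
      (neg_nonpos.2 (Nat.cast_nonneg N))
    rw [Real.norm_eq_abs, abs_of_nonneg (Real.rpow_nonneg (sq_nonneg _) _)]
    refine hle.trans (le_of_eq ?_)
    rw [Real.div_rpow (by positivity) (by norm_num : (0:ℝ) ≤ 2), Real.rpow_neg (by norm_num : (0:ℝ) ≤ 2),
      Real.rpow_natCast]
    field_simp

lemma aux_tail (N : ℕ) (hN : 1 ≤ N) {R : ℝ} (hR : 1 ≤ R) :
    ∫ x in {x : Euc N | R ≤ ‖x‖}, (1 + ‖x‖ ^ 2) ^ (-(N:ℝ)) ≤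
      (R ^ N)⁻¹ * ∫ x in {x : Euc N | 1 ≤ ‖x‖}, (‖x‖ ^ 2) ^ (-(N:ℝ)) := by
  have hR0 : (0:ℝ) < R := lt_of_lt_of_le one_pos hR
  set h : Euc N → ℝ := fun x => (‖x‖ ^ 2) ^ (-(N:ℝ)) with hh
  have hS3 : MeasurableSet {x : Euc N | R ≤ ‖x‖} :=
    (isClosed_le continuous_const continuous_norm).measurableSet
  have hsub : {x : Euc N | R ≤ ‖x‖} ⊆ {x : Euc N | 1 ≤ ‖x‖} :=
    fun x hx => le_trans hR hx
  have step1 : ∫ x in {x : Euc N | R ≤ ‖x‖}, (1 + ‖x‖ ^ 2) ^ (-(N:ℝ)) ≤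
      ∫ x in {x : Euc N | R ≤ ‖x‖}, h x := by
    refine setIntegral_mono_on ((aux_integrable N hN).integrableOn)
      ((aux_h_int N hN).mono_set hsub) hS3 fun x hx => ?_
    have hx1 : (1:ℝ) ≤ ‖x‖ := le_trans hR hx
    exact Real.rpow_le_rpow_of_nonpos (by nlinarith) (by nlinarith)
      (neg_nonpos.2 (Nat.cast_nonneg N))
  have hscale := aux_scale N h hS3 hR0 0
  have hset : {x : Euc N | R • x + 0 ∈ {x : Euc N | R ≤ ‖x‖}} = {x : Euc N | 1 ≤ ‖x‖} := by
    ext x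
    simp only [Set.mem_setOf_eq, add_zero, norm_smul, Real.norm_eq_abs, abs_of_pos hR0]
    exact le_mul_iff_one_le_right hR0
  rw [hset] at hscale
  have hpt : ∀ x : Euc N, h (R⁻¹ • (x - 0)) = R ^ (2 * N) * h x := by
    intro x
    simp only [hh, sub_zero, norm_smul, Real.norm_eq_abs, abs_of_pos (inv_pos.2 hR0), mul_pow]
    rw [Real.mul_rpow (sq_nonneg _) (sq_nonneg _), Real.rpow_neg (sq_nonneg _),
      Real.rpow_natCast]
    simp [← pow_mul, inv_pow]
  have hL : ∫ x in {x : Euc N | R ≤ ‖x‖}, h (R⁻¹ • (x - 0)) =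
      R ^ (2 * N) * ∫ x in {x : Euc N | R ≤ ‖x‖}, h x := by
    simp_rw [hpt]
    exact MeasureTheory.integral_const_mul _ _
  rw [hL] at hscale
  have hRN : (0:ℝ) < R ^ N := pow_pos hR0 N
  have h2N : R ^ (2 * N) = R ^ N * R ^ N := by rw [two_mul, pow_add]
  rw [h2N, mul_assoc] at hscale
  have hXc := mul_left_cancel₀ hRN.ne' hscale
  have hfin : ∫ x in {x : Euc N | R ≤ ‖x‖}, h x =
      (R ^ N)⁻¹ * ∫ x in {x : Euc N | 1 ≤ ‖x‖}, h x := by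
    rw [← hXc]
    field_simp
  exact step1.trans (le_of_eq hfin)

lemma bubble_pow (N : ℕ) (hN : 5 ≤ N) {μ : ℝ} (hμ : 0 < μ) (ξ x : Euc N) :
    bubble N μ ξ x ^ (2 * (N:ℝ) / ((N:ℝ) - 4)) =
      alphaN N ^ (2 * (N:ℝ) / ((N:ℝ) - 4)) *
        ((μ ^ N)⁻¹ * (1 + ‖μ⁻¹ • (x - ξ)‖ ^ 2) ^ (-(N:ℝ))) := by
  have hN5 : (5:ℝ) ≤ (N:ℝ) := by exact_mod_cast hN
  have hα : 0 < alphaN N := by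
    apply Real.rpow_pos_of_pos
    have h1 : (0:ℝ) < N := by linarith
    have h2 : (0:ℝ) < (N:ℝ) - 4 := by linarith
    have h3 : (0:ℝ) < (N:ℝ) - 2 := by linarith
    have h4 : (0:ℝ) < (N:ℝ) + 2 := by linarith
    positivity
  have hb : (0:ℝ) < μ ^ 2 + ‖x - ξ‖ ^ 2 := by positivity
  have hbase : (0:ℝ) < μ / (μ ^ 2 + ‖x - ξ‖ ^ 2) := div_pos hμ hb
  have hnorm : ‖μ⁻¹ • (x - ξ)‖ = μ⁻¹ * ‖x - ξ‖ := by
    rw [norm_smul, Real.norm_eq_abs, abs_of_pos (inv_pos.2 hμ)]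
  unfold bubble
  rw [Real.mul_rpow hα.le (Real.rpow_nonneg hbase.le _), ← Real.rpow_mul hbase.le]
  congr 1
  have hexp : ((N:ℝ) - 4) / 2 * (2 * (N:ℝ) / ((N:ℝ) - 4)) = (N:ℝ) := by
    have : (N:ℝ) - 4 ≠ 0 := by nlinarith
    field_simp
  rw [hexp]
  have hkey : μ / (μ ^ 2 + ‖x - ξ‖ ^ 2) = (μ * (1 + ‖μ⁻¹ • (x - ξ)‖ ^ 2))⁻¹ := by
    rw [hnorm]
    field_simp
  have h1s : (0:ℝ) < 1 + ‖μ⁻¹ • (x - ξ)‖ ^ 2 := by positivity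
  rw [hkey, ← Real.rpow_neg_one, ← Real.rpow_natCast _ N, ← Real.rpow_mul (by positivity),
    Real.mul_rpow hμ.le h1s.le]
  rw [show (-1 : ℝ) * (N:ℝ) = -(N:ℝ) by ring, Real.rpow_neg hμ.le, Real.rpow_natCast]


theorem statement15 (N : ℕ) (hN : 5 ≤ N) (Ω : Set (Euc N)) (hΩo : IsOpen Ω)
    (hΩb : Bornology.IsBounded Ω) (h0 : (0 : Euc N) ∈ Ω) (δ : ℝ) (hδ : 0 < δ) :
    ∃ ε₀ C : ℝ, 0 < ε₀ ∧ 0 < C ∧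
      ∀ ε d : ℝ, ∀ τ : Euc N, 0 < ε → ε < ε₀ → d ∈ Set.Icc δ (1 / δ) → ‖τ‖ ≤ 1 / δ →
      ∀ μ : ℝ, μ = d * ε ^ sigmaN N → ∀ ξ : Euc N, ξ = μ • τ →
        |(∫ x in Ω \ Metric.closedBall 0 ε, bubble N μ ξ x ^ (2 * (N : ℝ) / ((N : ℝ) - 4))) -
            alphaN N ^ (2 * (N : ℝ) / ((N : ℝ) - 4)) *
              ∫ y : Euc N, (1 + ‖y‖ ^ 2) ^ (-(N : ℝ))| ≤
          C * ((ε / μ) ^ (N : ℝ) + μ ^ (N : ℝ)) := by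
  have hN1 : 1 ≤ N := by omega
  have hN5 : (5:ℝ) ≤ (N:ℝ) := by exact_mod_cast hN
  have hfint : Integrable (fun y : Euc N => (1 + ‖y‖ ^ 2) ^ (-(N : ℝ))) := aux_integrable N hN1
  have hfnn : ∀ y : Euc N, 0 ≤ (1 + ‖y‖ ^ 2) ^ (-(N : ℝ)) :=
    fun y => Real.rpow_nonneg (by positivity) _
  have hfle1 : ∀ y : Euc N, (1 + ‖y‖ ^ 2) ^ (-(N : ℝ)) ≤ 1 := fun y =>
    Real.rpow_le_one_of_one_le_of_nonpos (by nlinarith [sq_nonneg ‖y‖])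
      (neg_nonpos.2 (Nat.cast_nonneg N))
  have hα : 0 < alphaN N := by
    apply Real.rpow_pos_of_pos
    have h1 : (0:ℝ) < N := by linarith
    have h2 : (0:ℝ) < (N:ℝ) - 4 := by linarith
    have h3 : (0:ℝ) < (N:ℝ) - 2 := by linarith
    have h4 : (0:ℝ) < (N:ℝ) + 2 := by linarith
    positivity
  obtain ⟨r₀, hr₀, hball⟩ := Metric.isOpen_iff.1 hΩo 0 h0
  have hσ : 0 < sigmaN N := div_pos (by linarith) (by linarith)
  set m := min (r₀ * δ / 2) (r₀ / 2) with hm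
  have hmpos : 0 < m := lt_min (by positivity) (by positivity)
  set c₁ := ∫ x in {x : Euc N | 1 ≤ ‖x‖}, (‖x‖ ^ 2) ^ (-(N:ℝ)) with hc₁
  have hc₁nn : 0 ≤ c₁ :=
    setIntegral_nonneg (isClosed_le continuous_const continuous_norm).measurableSet
      (fun x _ => Real.rpow_nonneg (sq_nonneg _) _)
  set K := (volume (Metric.ball (0:Euc N) 1)).toReal with hK
  have hKnn : 0 ≤ K := ENNReal.toReal_nonneg
  set A := alphaN N ^ (2 * (N:ℝ) / ((N:ℝ) - 4)) with hA
  have hApos : 0 < A := Real.rpow_pos_of_pos hα _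
  refine ⟨(δ * m) ^ (sigmaN N)⁻¹, A * ((2 / r₀) ^ N * c₁ + K) + 1,
    Real.rpow_pos_of_pos (by positivity) _, by positivity, ?_⟩
  intro ε d τ hε hεε₀ hd hτ μ hμdef ξ hξdef
  have hεσ : ε ^ sigmaN N ≤ δ * m := by
    calc ε ^ sigmaN N ≤ ((δ*m) ^ (sigmaN N)⁻¹) ^ sigmaN N :=
          Real.rpow_le_rpow hε.le hεε₀.le hσ.le
    _ = δ * m := Real.rpow_inv_rpow (by positivity) hσ.ne'
  have hμpos : 0 < μ := by
    rw [hμdef]; exact mul_pos (lt_of_lt_of_le hδ hd.1) (Real.rpow_pos_of_pos hε _)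
  have hμm : μ ≤ m := by
    rw [hμdef]
    calc d * ε ^ sigmaN N ≤ (1/δ) * (δ * m) :=
          mul_le_mul hd.2 hεσ (Real.rpow_nonneg hε.le _) (by positivity)
    _ = m := by field_simp
  have hμ1 : μ ≤ r₀ * δ / 2 := hμm.trans (min_le_left _ _)
  have hμ2 : μ ≤ r₀ / 2 := hμm.trans (min_le_right _ _)
  set S : Set (Euc N) := Ω \ Metric.closedBall 0 ε with hSdef
  have hSmeas : MeasurableSet S := hΩo.measurableSet.diff measurableSet_closedBall
  have hcont : Continuous (fun x : Euc N => μ • x + ξ) :=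
    (continuous_id.const_smul μ).add continuous_const
  set T : Set (Euc N) := {x | μ • x + ξ ∈ S} with hTdef
  have hTmeas : MeasurableSet T := hSmeas.preimage hcont.measurable
  have hptwise : ∀ x : Euc N, bubble N μ ξ x ^ (2 * (N:ℝ) / ((N:ℝ) - 4)) =
      A * ((μ ^ N)⁻¹ * (1 + ‖μ⁻¹ • (x - ξ)‖ ^ 2) ^ (-(N:ℝ))) := by
    intro x; rw [hA]; exact bubble_pow N hN hμpos ξ x
  have hI1 : ∫ x in S, bubble N μ ξ x ^ (2 * (N:ℝ) / ((N:ℝ) - 4)) =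
      A * ∫ x in T, (1 + ‖x‖ ^ 2) ^ (-(N:ℝ)) := by
    simp_rw [hptwise]
    rw [MeasureTheory.integral_const_mul, MeasureTheory.integral_const_mul,
      aux_scale N (fun y : Euc N => (1 + ‖y‖ ^ 2) ^ (-(N:ℝ))) hSmeas hμpos ξ]
    have : (μ ^ N : ℝ) ≠ 0 := (pow_pos hμpos N).ne'
    field_simp
    rfl
  have hTle : ∫ x in T, (1 + ‖x‖ ^ 2) ^ (-(N:ℝ)) ≤ ∫ y : Euc N, (1 + ‖y‖ ^ 2) ^ (-(N:ℝ)) :=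
    setIntegral_le_integral hfint (ae_of_all _ hfnn)
  have hsplit := integral_add_compl hTmeas hfint
  rw [hI1]
  have habs : |A * (∫ x in T, (1 + ‖x‖ ^ 2) ^ (-(N:ℝ))) -
      A * ∫ y : Euc N, (1 + ‖y‖ ^ 2) ^ (-(N:ℝ))| =
      A * ∫ x in Tᶜ, (1 + ‖x‖ ^ 2) ^ (-(N:ℝ)) := by
    rw [← mul_sub, abs_mul, abs_of_pos hApos]
    congr 1
    rw [abs_of_nonpos (sub_nonpos.2 hTle)]
    linarith [hsplit]
  rw [habs]
  -- decompose the complement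
  set T₁ : Set (Euc N) := {x | μ • x + ξ ∉ Ω} with hT₁def
  set T₂ : Set (Euc N) := {x | μ • x + ξ ∈ Metric.closedBall 0 ε} with hT₂def
  have hT₁meas : MeasurableSet T₁ := (hΩo.measurableSet.preimage hcont.measurable).compl
  have hT₂meas : MeasurableSet T₂ := measurableSet_closedBall.preimage hcont.measurable
  have hcompl : Tᶜ = T₁ ∪ (T₂ \ T₁) := by
    rw [Set.union_diff_self]
    ext x
    simp only [hTdef, hSdef, hT₁def, hT₂def, Set.mem_compl_iff, Set.mem_setOf_eq,
      Set.mem_diff, Set.mem_union, not_and, not_not]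
    tauto
  have hunion : ∫ x in Tᶜ, (1 + ‖x‖ ^ 2) ^ (-(N:ℝ)) =
      (∫ x in T₁, (1 + ‖x‖ ^ 2) ^ (-(N:ℝ))) + ∫ x in T₂ \ T₁, (1 + ‖x‖ ^ 2) ^ (-(N:ℝ)) := by
    rw [hcompl]
    exact setIntegral_union Set.disjoint_sdiff_right (hT₂meas.diff hT₁meas)
      hfint.integrableOn hfint.integrableOn
  have hdiffle : ∫ x in T₂ \ T₁, (1 + ‖x‖ ^ 2) ^ (-(N:ℝ)) ≤
      ∫ x in T₂, (1 + ‖x‖ ^ 2) ^ (-(N:ℝ)) :=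
    setIntegral_mono_set hfint.integrableOn (ae_of_all _ hfnn)
      (HasSubset.Subset.eventuallyLE Set.diff_subset)
  -- bound on T₂
  have hsubT₂ : T₂ ⊆ Metric.closedBall (-τ) (ε / μ) := by
    intro x hx
    have hx'' : μ • x + ξ ∈ Metric.closedBall (0 : Euc N) ε := hx
    rw [Metric.mem_closedBall, dist_zero_right] at hx''
    have hx' : ‖μ • x + ξ‖ ≤ ε := hx''
    have heq : μ • x + ξ = μ • (x + τ) := by rw [hξdef, smul_add]
    rw [heq, norm_smul, Real.norm_eq_abs, abs_of_pos hμpos] at hx'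
    rw [Metric.mem_closedBall, dist_eq_norm, sub_neg_eq_add, le_div_iff₀ hμpos]
    linarith [hx']
  have hT₂bound : ∫ x in T₂, (1 + ‖x‖ ^ 2) ^ (-(N:ℝ)) ≤ (ε/μ) ^ N * K := by
    have h1 : ∫ x in T₂, (1 + ‖x‖ ^ 2) ^ (-(N:ℝ)) ≤
        ∫ x in Metric.closedBall (-τ) (ε/μ), (1 + ‖x‖ ^ 2) ^ (-(N:ℝ)) :=
      setIntegral_mono_set hfint.integrableOn (ae_of_all _ hfnn)
        (HasSubset.Subset.eventuallyLE hsubT₂)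
    have h2 : ∫ x in Metric.closedBall (-τ) (ε/μ), (1 + ‖x‖ ^ 2) ^ (-(N:ℝ)) ≤
        ∫ _x in Metric.closedBall (-τ) (ε/μ), (1:ℝ) :=
      setIntegral_mono_on hfint.integrableOn
        (integrableOn_const measure_closedBall_lt_top.ne) measurableSet_closedBall
        (fun x _ => hfle1 x)
    have h3 : ∫ _x in Metric.closedBall (-τ) (ε/μ), (1:ℝ) = (ε/μ) ^ N * K := by
      rw [setIntegral_const, smul_eq_mul, mul_one, measureReal_def,
        Measure.addHaar_closedBall _ _ (by positivity : (0:ℝ) ≤ ε/μ),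
        ENNReal.toReal_mul, ENNReal.toReal_ofReal (by positivity), finrank_euclideanSpace_fin]
    linarith
  -- bound on T₁
  set R := r₀ / (2 * μ) with hRdef
  have hR1 : 1 ≤ R := by rw [hRdef, le_div_iff₀ (by positivity)]; linarith
  have hsubT₁ : T₁ ⊆ {x : Euc N | R ≤ ‖x‖} := by
    intro x hx
    have hnotin : μ • x + ξ ∉ Metric.ball (0:Euc N) r₀ := fun h => hx (hball h)
    have h1 : r₀ ≤ ‖μ • x + ξ‖ := by
      by_contra h
      exact hnotin (by simpa [Metric.mem_ball, dist_zero_right] using lt_of_not_ge h)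
    have h2 : ‖μ • x + ξ‖ ≤ μ * ‖x‖ + μ * ‖τ‖ := by
      calc ‖μ • x + ξ‖ ≤ ‖μ • x‖ + ‖ξ‖ := norm_add_le _ _
      _ = μ * ‖x‖ + μ * ‖τ‖ := by
          rw [hξdef, norm_smul, norm_smul, Real.norm_eq_abs, abs_of_pos hμpos]
    have h3 : μ * ‖τ‖ ≤ r₀ / 2 := by
      calc μ * ‖τ‖ ≤ μ * (1/δ) := mul_le_mul_of_nonneg_left hτ hμpos.le
      _ ≤ r₀ / 2 := by
          rw [mul_one_div, div_le_iff₀ hδ]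
          linarith [hμ1]
    show R ≤ ‖x‖
    rw [hRdef, div_le_iff₀ (by positivity)]
    nlinarith [h1, h2, h3]
  have hT₁bound : ∫ x in T₁, (1 + ‖x‖ ^ 2) ^ (-(N:ℝ)) ≤ (R ^ N)⁻¹ * c₁ := by
    have h1 : ∫ x in T₁, (1 + ‖x‖ ^ 2) ^ (-(N:ℝ)) ≤
        ∫ x in {x : Euc N | R ≤ ‖x‖}, (1 + ‖x‖ ^ 2) ^ (-(N:ℝ)) :=
      setIntegral_mono_set hfint.integrableOn (ae_of_all _ hfnn)
        (HasSubset.Subset.eventuallyLE hsubT₁)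
    exact h1.trans (aux_tail N hN1 hR1)
  have hRNinv : (R ^ N)⁻¹ = (2/r₀) ^ N * μ ^ N := by
    rw [hRdef, ← inv_pow, ← mul_pow]
    congr 1
    field_simp
  -- final assembly
  rw [Real.rpow_natCast, Real.rpow_natCast]
  have hTc : ∫ x in Tᶜ, (1 + ‖x‖ ^ 2) ^ (-(N:ℝ)) ≤
      (2/r₀) ^ N * c₁ * μ ^ N + K * (ε/μ) ^ N := by
    rw [hunion]
    have := hT₁bound
    rw [hRNinv] at this
    nlinarith [hdiffle, hT₂bound, this]
  have he0 : (0:ℝ) ≤ (ε/μ) ^ N := by positivity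
  have hm0 : (0:ℝ) ≤ μ ^ N := by positivity
  have hc' : (0:ℝ) ≤ (2/r₀) ^ N * c₁ := by positivity
  have hstep : A * ∫ x in Tᶜ, (1 + ‖x‖ ^ 2) ^ (-(N:ℝ)) ≤
      A * ((2/r₀) ^ N * c₁ * μ ^ N + K * (ε/μ) ^ N) :=
    mul_le_mul_of_nonneg_left hTc hApos.le
  refine hstep.trans ?_
  nlinarith [mul_nonneg (mul_nonneg hApos.le hc') he0, mul_nonneg (mul_nonneg hApos.le hKnn) hm0,
    mul_nonneg he0 hm0, hApos.le]
end
end
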